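/- Define a sequence of integers p by p(2) = 8 and, for n ≥ 3, p(n) = 4·(p(n−1) + (2^(n−1) − 2)) + 5·(2^(n−1) − 1) + 1 − 2·(2^(n−1) − 1). Then for all n ≥ 2, 3·p(n) = 7·2^(2n−1) − 21·2^(n−1) + 10; equivalently p(n) = (7/3)·2^(2n−1) − 7·2^(n−1) + 10/3. -/
import Mathlib


/-- The POA gate-count recurrence `p(2) = 8`,
`p(n) = 4·(p(n−1) + (2^(n−1) − 2)) + 5·(2^(n−1) − 1) + 1 − 2·(2^(n−1) − 1)` for `n ≥ 3`,
has the closed form `3·p(n) = 7·2^(2n−1) − 21·2^(n−1) + 10` for all `n ≥ 2`. -/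
theorem poa_closed_form (p : ℕ → ℤ) (h2 : p 2 = 8)
    (hrec : ∀ n : ℕ, 3 ≤ n →
      p n = 4 * (p (n - 1) + ((2 : ℤ) ^ (n - 1) - 2)) + 5 * ((2 : ℤ) ^ (n - 1) - 1) + 1
        - 2 * ((2 : ℤ) ^ (n - 1) - 1)) :
    ∀ n : ℕ, 2 ≤ n →
      3 * p n = 7 * (2 : ℤ) ^ (2 * n - 1) - 21 * (2 : ℤ) ^ (n - 1) + 10 := by
  intro n hn
  induction n, hn using Nat.le_induction with
  | base => norm_num [h2]
  | succ n hn ih =>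
    have hr := hrec (n + 1) (by omega)
    have e1 : n + 1 - 1 = n := by omega
    have e2 : 2 * (n + 1) - 1 = (2 * n - 1) + 2 := by omega
    obtain ⟨m, rfl⟩ : ∃ m, n = m + 1 := ⟨n - 1, by omega⟩
    have e3 : 2 * (m + 1) - 1 = 2 * m + 1 := by omega
    have e4 : m + 1 - 1 = m := rfl
    rw [hr, e1]
    rw [e3, e4] at ih
    rw [e2, e3]
    have ha : (2:ℤ)^(m+1) = 2 * 2^m := by rw [pow_succ]; ring
    have hb : (2:ℤ)^(2*m+1) = 2 * (2^m * 2^m) := by rw [two_mul, pow_succ, pow_add]; ring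
    have hc : (2:ℤ)^(2*m+1+2) = 8 * (2^m * 2^m) := by rw [pow_add, hb]; ring
    rw [ha, hc]
    rw [hb] at ih
    linarith
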